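/- The cycle of length 5 is not odd 4-colorable, but for each vertex v of C5 there is a proper 4-coloring φ of C5 such that every vertex u ≠ v satisfies the odd condition and v satisfies the even condition with respect to φ. -/
import Mathlib


open SimpleGraph

/-- A proper 4-coloring: adjacent vertices receive distinct colors. -/
def IsProper4 {V : Type*} (G : SimpleGraph V) (φ : V → Fin 4) : Prop :=
  ∀ ⦃u w : V⦄, G.Adj u w → φ u ≠ φ w

/-- The number of neighbors of `v` colored `i`. -/
noncomputable def nbrCount {V : Type*} (G : SimpleGraph V) (φ : V → Fin 4) (v : V) (i : Fin 4) : ℕ :=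
  {u | u ∈ G.neighborSet v ∧ φ u = i}.ncard

/-- `v` satisfies the odd condition: some color appears an odd number of times in `N(v)`. -/
def OddAt {V : Type*} (G : SimpleGraph V) (φ : V → Fin 4) (v : V) : Prop :=
  ∃ i : Fin 4, Odd (nbrCount G φ v i)

/-- `v` satisfies the even condition: some color `i ≠ φ v` appears an even number
of times (possibly zero) in `N(v)`. -/
def EvenAt {V : Type*} (G : SimpleGraph V) (φ : V → Fin 4) (v : V) : Prop :=
  ∃ i : Fin 4, i ≠ φ v ∧ Even (nbrCount G φ v i)

/-- An odd 4-coloring: a proper 4-coloring in which every non-isolated vertex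
satisfies the odd condition. -/
def IsOdd4Coloring {V : Type*} (G : SimpleGraph V) (φ : V → Fin 4) : Prop :=
  IsProper4 G φ ∧ ∀ v : V, (G.neighborSet v).Nonempty → OddAt G φ v

set_option maxRecDepth 4000

/-- Explicit formula for the neighbor color count in `C5`. -/
def cnt (φ : Fin 5 → Fin 4) (v : Fin 5) (i : Fin 4) : ℕ :=
  (if φ (v-1) = i then 1 else 0) + (if φ (v+1) = i then 1 else 0)

lemma nbrCount_c5 (φ : Fin 5 → Fin 4) (v : Fin 5) (i : Fin 4) :
    nbrCount (SimpleGraph.cycleGraph 5) φ v i = cnt φ v i := by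
  have hne : v - 1 ≠ v + 1 := by revert v; decide
  have hset : {u | u ∈ (SimpleGraph.cycleGraph 5).neighborSet v ∧ φ u = i} =
      ↑(({v-1, v+1} : Finset (Fin 5)).filter (fun u => φ u = i)) := by
    rw [show (SimpleGraph.cycleGraph 5).neighborSet v = {v-1, v+1} from
      cycleGraph_neighborSet (n := 3)]
    ext u
    simp [Set.mem_insert_iff]
  unfold nbrCount
  rw [hset, Set.ncard_coe_finset]
  unfold cnt
  by_cases h1 : φ (v-1) = i <;> by_cases h2 : φ (v+1) = i <;>
    simp [Finset.filter_insert, Finset.filter_singleton, h1, h2, hne]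

lemma adj_c5 (v : Fin 5) : (SimpleGraph.cycleGraph 5).Adj v (v + 1) := by
  revert v; decide

lemma not_odd_of_eq (φ : Fin 5 → Fin 4) (v : Fin 5) (hv : φ (v-1) = φ (v+1)) (i : Fin 4) :
    ¬ Odd (cnt φ v i) := by
  unfold cnt
  rw [hv]
  by_cases h : φ (v+1) = i <;> simp [h]

lemma pair_cases : ∀ a b : Fin 5, a ≠ b → (SimpleGraph.cycleGraph 5).Adj a b ∨
    (∃ c : Fin 5, (a = c - 1 ∧ b = c + 1) ∨ (a = c + 1 ∧ b = c - 1)) := by decide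

lemma almost_aux (v : Fin 5) (φ : Fin 5 → Fin 4)
    (h1 : ∀ ⦃u w : Fin 5⦄, (SimpleGraph.cycleGraph 5).Adj u w → φ u ≠ φ w)
    (h2 : ∀ u : Fin 5, u ≠ v → ∃ i, Odd (cnt φ u i))
    (h3 : ∃ i, i ≠ φ v ∧ Even (cnt φ v i)) :
    ∃ ψ : Fin 5 → Fin 4,
      IsProper4 (SimpleGraph.cycleGraph 5) ψ ∧
      (∀ u : Fin 5, u ≠ v → OddAt (SimpleGraph.cycleGraph 5) ψ u) ∧
      EvenAt (SimpleGraph.cycleGraph 5) ψ v := by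
  refine ⟨φ, h1, fun u hu => ?_, ?_⟩
  · obtain ⟨i, hi⟩ := h2 u hu
    exact ⟨i, by rw [nbrCount_c5]; exact hi⟩
  · obtain ⟨i, hne, he⟩ := h3
    exact ⟨i, hne, by rw [nbrCount_c5]; exact he⟩

theorem c5_not_odd4colorable_but_almost :
    (¬ ∃ φ : Fin 5 → Fin 4, IsOdd4Coloring (SimpleGraph.cycleGraph 5) φ) ∧
    ∀ v : Fin 5, ∃ φ : Fin 5 → Fin 4,
      IsProper4 (SimpleGraph.cycleGraph 5) φ ∧
      (∀ u : Fin 5, u ≠ v → OddAt (SimpleGraph.cycleGraph 5) φ u) ∧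
      EvenAt (SimpleGraph.cycleGraph 5) φ v := by
  constructor
  · rintro ⟨φ, hp, ho⟩
    -- distance-2 vertices get distinct colors, by the odd condition
    have hdist2 : ∀ c : Fin 5, φ (c - 1) ≠ φ (c + 1) := by
      intro c hc
      obtain ⟨i, hi⟩ := ho c ⟨c + 1, adj_c5 c⟩
      rw [nbrCount_c5] at hi
      exact not_odd_of_eq φ c hc i hi
    have hinj : Function.Injective φ := by
      intro a b hab
      by_contra hne
      rcases pair_cases a b hne with h | ⟨c, ⟨ha, hb⟩ | ⟨ha, hb⟩⟩
      · exact hp h hab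
      · exact hdist2 c (ha ▸ hb ▸ hab)
      · exact hdist2 c (ha ▸ hb ▸ hab.symm)
    have := Fintype.card_le_of_injective φ hinj
    simp at this
  · intro v
    fin_cases v
    · exact almost_aux 0 ![0,1,2,3,1] (by decide) (by decide) (by decide)
    · exact almost_aux 1 ![1,0,1,2,3] (by decide) (by decide) (by decide)
    · exact almost_aux 2 ![3,1,0,1,2] (by decide) (by decide) (by decide)
    · exact almost_aux 3 ![2,3,1,0,1] (by decide) (by decide) (by decide)
    · exact almost_aux 4 ![1,2,3,1,0] (by decide) (by decide) (by decide)
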